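/- Let (X_n)_{n≥1} be square-integrable random variables with common mean η = E[X_n] for all n, and suppose |E[X_n X_m] − η²| ≤ ρ(|n − m|) for a function ρ : ℕ₀ → [0,∞) with R := Σ_{m=0}^∞ ρ(m) < ∞. Let (b_n)_{n≥1} be a non-decreasing sequence of positive reals, and set S_n = Σ_{k=1}^n b_k X_k and A_n = Σ_{k=1}^n b_k. Then for every n, E[|S_n − E[S_n]|²] ≤ 2 R b_n A_n. -/

import Mathlib

open Filter MeasureTheory Topology

private lemma sum_rho_le_twoR {ρ : ℕ → ℝ} (hρnn : ∀ m, 0 ≤ ρ m) {R : ℝ} (hR : HasSum ρ R)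
    (n k : ℕ) : ∑ j ∈ Finset.Icc 1 n, ρ (Nat.dist j k) ≤ 2 * R := by
  classical
  have hinj : ∀ (s : Finset ℕ) (f : ℕ → ℕ),
      (∀ x ∈ s, ∀ y ∈ s, f x = f y → x = y) → ∑ j ∈ s, ρ (f j) ≤ R := by
    intro s f hf
    rw [← Finset.sum_image hf]
    exact (Summable.sum_le_tsum _ (fun i _ => hρnn i) hR.summable).trans_eq hR.tsum_eq
  rw [← Finset.sum_filter_add_sum_filter_not (Finset.Icc 1 n) (· ≤ k)]
  have h1 : ∑ j ∈ (Finset.Icc 1 n).filter (· ≤ k), ρ (Nat.dist j k) ≤ R := by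
    have : ∀ j ∈ (Finset.Icc 1 n).filter (· ≤ k), ρ (Nat.dist j k) = ρ (k - j) := by
      intro j hj
      rw [Nat.dist_eq_sub_of_le (Finset.mem_filter.mp hj).2]
    rw [Finset.sum_congr rfl this]
    refine hinj _ (fun j => k - j) ?_
    intro x hx y hy hxy
    have hx' := (Finset.mem_filter.mp hx).2
    have hy' := (Finset.mem_filter.mp hy).2
    have hxy' : k - x = k - y := hxy
    omega
  have h2 : ∑ j ∈ (Finset.Icc 1 n).filter (fun j => ¬ j ≤ k), ρ (Nat.dist j k) ≤ R := by
    have : ∀ j ∈ (Finset.Icc 1 n).filter (fun j => ¬ j ≤ k), ρ (Nat.dist j k) = ρ (j - k) := by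
      intro j hj
      have := (Finset.mem_filter.mp hj).2
      rw [Nat.dist_eq_sub_of_le_right (by omega)]
    rw [Finset.sum_congr rfl this]
    refine hinj _ (fun j => j - k) ?_
    intro x hx y hy hxy
    have hx' := (Finset.mem_filter.mp hx).2
    have hy' := (Finset.mem_filter.mp hy).2
    have hxy' : x - k = y - k := hxy
    simp only [decide_eq_true_eq, not_le] at hx' hy'
    omega
  linarith

theorem stmt_2 {Ω : Type*} [MeasurableSpace Ω] (P : Measure Ω) [IsProbabilityMeasure P]
    (X : ℕ → Ω → ℝ) (hX : ∀ n, 1 ≤ n → MemLp (X n) 2 P)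
    (η : ℝ) (hη : ∀ n, 1 ≤ n → ∫ ω, X n ω ∂P = η)
    (ρ : ℕ → ℝ) (hρnn : ∀ m, 0 ≤ ρ m)
    (hcorr : ∀ m n : ℕ, 1 ≤ m → 1 ≤ n →
      |(∫ ω, X n ω * X m ω ∂P) - η ^ 2| ≤ ρ (Nat.dist n m))
    (R : ℝ) (hR : HasSum ρ R)
    (b : ℕ → ℝ) (hbpos : ∀ n, 1 ≤ n → 0 < b n)
    (hbmono : ∀ m n, 1 ≤ m → m ≤ n → b m ≤ b n)
    (S : ℕ → Ω → ℝ) (hS : ∀ n ω, S n ω = ∑ k ∈ Finset.Icc 1 n, b k * X k ω)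
    (A : ℕ → ℝ) (hA : ∀ n, A n = ∑ k ∈ Finset.Icc 1 n, b k) :
    ∀ n, 1 ≤ n →
      ∫ ω, |S n ω - ∫ ω', S n ω' ∂P| ^ 2 ∂P ≤ 2 * R * b n * A n := by
  intro n hn
  set I : Finset ℕ := Finset.Icc 1 n with hI
  have hmem : ∀ k ∈ I, 1 ≤ k ∧ k ≤ n := fun k hk => Finset.mem_Icc.mp hk
  have hXm : ∀ k ∈ I, MemLp (X k) 2 P := fun k hk => hX k (hmem k hk).1
  have hXint : ∀ k ∈ I, Integrable (X k) P :=
    fun k hk => (hXm k hk).integrable (by norm_num)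
  have hYm : ∀ k ∈ I, MemLp (fun ω => X k ω - η) 2 P :=
    fun k hk => (hXm k hk).sub (memLp_const η)
  -- product of two L² functions is integrable
  have hmul : ∀ (f g : Ω → ℝ), MemLp f 2 P → MemLp g 2 P →
      Integrable (fun ω => f ω * g ω) P := by
    intro f g hf hg
    have : MemLp (f • g) 1 P := hg.smul hf (hpqr := ⟨by norm_num [ENNReal.inv_two_add_inv_two]⟩)
    exact memLp_one_iff_integrable.mp this
  have hXXint : ∀ j ∈ I, ∀ k ∈ I, Integrable (fun ω => X j ω * X k ω) P :=
    fun j hj k hk => hmul _ _ (hXm j hj) (hXm k hk)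
  -- the mean of S n
  have hES : ∫ ω, S n ω ∂P = ∑ k ∈ I, b k * η := by
    calc ∫ ω, S n ω ∂P = ∫ ω, ∑ k ∈ I, b k * X k ω ∂P := by simp only [hS, hI]
      _ = ∑ k ∈ I, ∫ ω, b k * X k ω ∂P :=
          integral_finset_sum _ (fun k hk => (hXint k hk).const_mul _)
      _ = ∑ k ∈ I, b k * η := by
          refine Finset.sum_congr rfl fun k hk => ?_
          rw [MeasureTheory.integral_const_mul, hη k (hmem k hk).1]
  -- centering
  have hcenter : ∀ ω, S n ω - ∫ ω', S n ω' ∂P = ∑ k ∈ I, b k * (X k ω - η) := by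
    intro ω
    rw [hES, hS, ← Finset.sum_sub_distrib]
    exact Finset.sum_congr rfl fun k _ => by ring
  -- covariance computation
  have hcov : ∀ j ∈ I, ∀ k ∈ I,
      ∫ ω, (b j * (X j ω - η)) * (b k * (X k ω - η)) ∂P
        = (b j * b k) * ((∫ ω, X j ω * X k ω ∂P) - η ^ 2) := by
    intro j hj k hk
    have h1 : (fun ω => (b j * (X j ω - η)) * (b k * (X k ω - η)))
        = fun ω => (b j * b k) * ((X j ω * X k ω - η * X j ω) - (η * X k ω - η * η)) := by
      funext ω; ring
    rw [h1, MeasureTheory.integral_const_mul]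
    congr 1
    have i1 : Integrable (fun ω => X j ω * X k ω - η * X j ω) P :=
      (hXXint j hj k hk).sub ((hXint j hj).const_mul η)
    have i2 : Integrable (fun ω => η * X k ω - η * η) P :=
      ((hXint k hk).const_mul η).sub (integrable_const _)
    rw [MeasureTheory.integral_sub i1 i2, MeasureTheory.integral_sub (hXXint j hj k hk)
      ((hXint j hj).const_mul η), MeasureTheory.integral_sub ((hXint k hk).const_mul η)
      (integrable_const _), MeasureTheory.integral_const_mul, MeasureTheory.integral_const_mul,
      hη j (hmem j hj).1, hη k (hmem k hk).1]
    simp only [MeasureTheory.integral_const, measure_univ, probReal_univ, ENNReal.toReal_one, smul_eq_mul,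
      one_mul, sq]
    ring
  -- integrability of cross terms
  have hYint : ∀ j ∈ I, ∀ k ∈ I,
      Integrable (fun ω => (b j * (X j ω - η)) * (b k * (X k ω - η))) P := by
    intro j hj k hk
    have h1 : (fun ω => (b j * (X j ω - η)) * (b k * (X k ω - η)))
        = fun ω => (b j * b k) * ((X j ω - η) * (X k ω - η)) := by
      funext ω; ring
    rw [h1]
    exact (hmul _ _ (hYm j hj) (hYm k hk)).const_mul _
  -- main identity
  have hmain : ∫ ω, |S n ω - ∫ ω', S n ω' ∂P| ^ 2 ∂P
      = ∑ j ∈ I, ∑ k ∈ I, (b j * b k) * ((∫ ω, X j ω * X k ω ∂P) - η ^ 2) := by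
    have hptw : ∀ ω, |S n ω - ∫ ω', S n ω' ∂P| ^ 2
        = ∑ j ∈ I, ∑ k ∈ I, (b j * (X j ω - η)) * (b k * (X k ω - η)) := by
      intro ω
      rw [sq_abs, hcenter, sq, Finset.sum_mul_sum]
    calc ∫ ω, |S n ω - ∫ ω', S n ω' ∂P| ^ 2 ∂P
        = ∫ ω, ∑ j ∈ I, ∑ k ∈ I, (b j * (X j ω - η)) * (b k * (X k ω - η)) ∂P := by
          exact MeasureTheory.integral_congr_ae (Filter.Eventually.of_forall hptw)
      _ = ∑ j ∈ I, ∫ ω, ∑ k ∈ I, (b j * (X j ω - η)) * (b k * (X k ω - η)) ∂P :=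
          integral_finset_sum _ (fun j hj =>
            integrable_finset_sum _ (fun k hk => hYint j hj k hk))
      _ = ∑ j ∈ I, ∑ k ∈ I, ∫ ω, (b j * (X j ω - η)) * (b k * (X k ω - η)) ∂P :=
          Finset.sum_congr rfl (fun j hj =>
            integral_finset_sum _ (fun k hk => hYint j hj k hk))
      _ = ∑ j ∈ I, ∑ k ∈ I, (b j * b k) * ((∫ ω, X j ω * X k ω ∂P) - η ^ 2) :=
          Finset.sum_congr rfl fun j hj => Finset.sum_congr rfl fun k hk => hcov j hj k hk
  rw [hmain]
  have hbn : 0 < b n := hbpos n hn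
  have hbk : ∀ k ∈ I, 0 < b k := fun k hk => hbpos k (hmem k hk).1
  -- step 1: bound each covariance by ρ
  have step1 : ∑ j ∈ I, ∑ k ∈ I, (b j * b k) * ((∫ ω, X j ω * X k ω ∂P) - η ^ 2)
      ≤ ∑ j ∈ I, ∑ k ∈ I, (b j * b k) * ρ (Nat.dist j k) := by
    refine Finset.sum_le_sum fun j hj => Finset.sum_le_sum fun k hk => ?_
    refine mul_le_mul_of_nonneg_left ?_ (le_of_lt (mul_pos (hbk j hj) (hbk k hk)))
    exact (le_abs_self _).trans (hcorr k j (hmem k hk).1 (hmem j hj).1)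
  -- step 2: b j ≤ b n
  have step2 : ∑ j ∈ I, ∑ k ∈ I, (b j * b k) * ρ (Nat.dist j k)
      ≤ ∑ j ∈ I, ∑ k ∈ I, (b n * b k) * ρ (Nat.dist j k) := by
    refine Finset.sum_le_sum fun j hj => Finset.sum_le_sum fun k hk => ?_
    refine mul_le_mul_of_nonneg_right (mul_le_mul_of_nonneg_right ?_ (hbk k hk).le)
      (hρnn _)
    exact hbmono j n (hmem j hj).1 (hmem j hj).2
  -- step 3: sum the ρ
  have step3 : ∑ j ∈ I, ∑ k ∈ I, (b n * b k) * ρ (Nat.dist j k)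
      ≤ 2 * R * b n * A n := by
    rw [Finset.sum_comm]
    have : ∀ k ∈ I, ∑ j ∈ I, (b n * b k) * ρ (Nat.dist j k)
        ≤ (b n * b k) * (2 * R) := by
      intro k hk
      rw [← Finset.mul_sum]
      exact mul_le_mul_of_nonneg_left (sum_rho_le_twoR hρnn hR n k)
        (le_of_lt (mul_pos hbn (hbk k hk)))
    calc ∑ k ∈ I, ∑ j ∈ I, (b n * b k) * ρ (Nat.dist j k)
        ≤ ∑ k ∈ I, (b n * b k) * (2 * R) := Finset.sum_le_sum this
      _ = 2 * R * b n * A n := by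
          rw [hA, Finset.mul_sum]
          exact Finset.sum_congr rfl fun k _ => by ring
  linarith [step1, step2, step3]
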